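/- arXiv:1707.07918 — 2 statements merged into one kernel-verified Lean document; each statement's English description precedes it below -/
import Mathlib

section
/- Let $G$ be a group and $\|\cdot\| : G \to \mathbb{R}$ a seminorm arising from an invariant semimetric, i.e. $\|g\| \ge 0$, $\|g^{-1}\| = \|g\|$, and $\|gh\| \le \|g\| + \|h\|$ for all $g, h \in G$. Define $\tau(g) = \liminf_{n \to \infty} \|g^n\|/n$, and suppose there exists $\varepsilon > 0$ such that $\tau(g) \ge \varepsilon$ for every infinite-order element $g \in G$ (i.e. the seminorm is translation discrete). Then for every fixed infinite-order element $a \in G$, the set $\{k \in \mathbb{Z} : \exists\, b \in G,\ b^k = a\}$ is finite. -/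
private lemma pow_norm_le (G : Type*) [Group G] (norm : G → ℝ)
    (hsub : ∀ g h : G, norm (g * h) ≤ norm g + norm h) (g : G) :
    ∀ n : ℕ, norm (g ^ (n + 1)) ≤ (n + 1 : ℝ) * norm g := by
  intro n
  induction n with
  | zero => simp
  | succ n ih =>
      have h1 : g ^ (n + 2) = g ^ (n + 1) * g := by
        rw [pow_succ]
      calc norm (g ^ (n + 2)) = norm (g ^ (n + 1) * g) := by rw [h1]
        _ ≤ norm (g ^ (n + 1)) + norm g := hsub _ _
        _ ≤ (n + 1 : ℝ) * norm g + norm g := by linarith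
        _ = ((n+1 : ℕ) + 1 : ℝ) * norm g := by push_cast; ring

private lemma key_bound (G : Type*) [Group G] (norm : G → ℝ)
    (hnn : ∀ g, 0 ≤ norm g)
    (hsub : ∀ g h : G, norm (g * h) ≤ norm g + norm h)
    (ε : ℝ) (hε : 0 < ε)
    (hdisc : ∀ g : G, (∀ n : ℕ, 0 < n → g ^ n ≠ 1) →
      ε ≤ Filter.liminf (fun n : ℕ => norm (g ^ n) / n) Filter.atTop)
    (a : G) (ha : ∀ n : ℕ, 0 < n → a ^ n ≠ 1)
    (m : ℕ) (hm : 0 < m) (c : G) (hc : c ^ m = a) :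
    (m : ℝ) ≤ 2 * norm a / ε := by
  have hcinf : ∀ n : ℕ, 0 < n → c ^ n ≠ 1 := by
    intro n hn h1
    apply ha n hn
    rw [← hc, ← pow_mul, mul_comm, pow_mul, h1, one_pow]
  have hl := hdisc c hcinf
  have hlt : ε / 2 < Filter.liminf (fun n : ℕ => norm (c ^ n) / n) Filter.atTop :=
    lt_of_lt_of_le (by linarith) hl
  have hbdd : Filter.IsBoundedUnder (· ≥ ·) Filter.atTop
      (fun n : ℕ => norm (c ^ n) / n) :=
    Filter.isBoundedUnder_of ⟨0, fun n =>
      div_nonneg (hnn _) (Nat.cast_nonneg _)⟩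
  have hev := Filter.eventually_lt_of_lt_liminf hlt hbdd
  obtain ⟨N, hN⟩ := Filter.eventually_atTop.mp hev
  set j := m * (N + 1) with hj
  have hjN : N ≤ j := by
    calc N ≤ N + 1 := by omega
      _ ≤ m * (N + 1) := Nat.le_mul_of_pos_left _ hm
  have h1 : ε / 2 < norm (c ^ j) / j := hN j hjN
  have h2 : c ^ j = a ^ (N + 1) := by
    rw [hj, pow_mul, hc]
  have h3 : norm (a ^ (N + 1)) ≤ (N + 1 : ℝ) * norm a :=
    pow_norm_le G norm hsub a N
  have hjpos : 0 < (j : ℝ) := by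
    have : 0 < j := by positivity
    exact_mod_cast this
  have h4 : ε / 2 * j < norm (c ^ j) := by
    rw [div_lt_div_iff₀ (by linarith) hjpos] at h1
    linarith
  rw [h2] at h4
  have hjcast : (j : ℝ) = (m : ℝ) * (N + 1 : ℝ) := by
    push_cast [hj]; ring
  have hN1pos : (0:ℝ) < (N + 1 : ℝ) := by positivity
  have h5 : ε / 2 * ((m : ℝ) * (N + 1)) < (N + 1 : ℝ) * norm a := by
    rw [← hjcast]; linarith
  have h6 : ε / 2 * (m : ℝ) < norm a := by
    have := (mul_lt_mul_iff_left₀ hN1pos).mp (by linarith [h5] : ε / 2 * (m:ℝ) * (N+1) < norm a * (N+1))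
    linarith
  rw [le_div_iff₀ hε]
  nlinarith

/-- For a translation discrete seminorm on `G` and a fixed infinite-order element `a`,
the set of integers `k` such that `a` admits a `k`-th root in `G` is finite. -/
theorem roots_of_infinite_order_element_finite
    (G : Type*) [Group G] (norm : G → ℝ)
    (hnn : ∀ g, 0 ≤ norm g)
    (hinv : ∀ g : G, norm g⁻¹ = norm g)
    (hsub : ∀ g h : G, norm (g * h) ≤ norm g + norm h)
    (ε : ℝ) (hε : 0 < ε)
    (hdisc : ∀ g : G, (∀ n : ℕ, 0 < n → g ^ n ≠ 1) →
      ε ≤ Filter.liminf (fun n : ℕ => norm (g ^ n) / n) Filter.atTop)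
    (a : G) (ha : ∀ n : ℕ, 0 < n → a ^ n ≠ 1) :
    {k : ℤ | ∃ b : G, b ^ k = a}.Finite := by
  set N : ℤ := ⌈2 * norm a / ε⌉ with hNdef
  apply Set.Finite.subset (Set.finite_Icc (-N) N)
  rintro k ⟨b, hb⟩
  have hk0 : k ≠ 0 := by
    rintro rfl
    exact ha 1 one_pos (by simpa using hb.symm)
  have habs : (|k| : ℝ) ≤ 2 * norm a / ε := by
    rcases lt_or_gt_of_ne hk0 with hneg | hpos
    · have hm : 0 < (-k).toNat := by omega
      have hc : (b⁻¹) ^ (-k).toNat = a := by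
        have : ((-k).toNat : ℤ) = -k := by omega
        rw [← zpow_natCast, this, inv_zpow, ← zpow_neg, neg_neg, hb]
      have := key_bound G norm hnn hsub ε hε hdisc a ha _ hm _ hc
      have hint : ((-k).toNat : ℤ) = -k := by omega
      have h2 : (((-k).toNat : ℤ) : ℝ) = |(k:ℝ)| := by
        rw [abs_of_neg (show (k:ℝ) < 0 by exact_mod_cast hneg)]
        exact_mod_cast hint
      calc (|k| : ℝ) = |(k : ℝ)| := by push_cast; ring
        _ = (((-k).toNat : ℤ) : ℝ) := h2.symm
        _ ≤ 2 * norm a / ε := by exact_mod_cast this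
    · have hm : 0 < k.toNat := by omega
      have hc : b ^ k.toNat = a := by
        have : (k.toNat : ℤ) = k := by omega
        rw [← zpow_natCast, this, hb]
      have := key_bound G norm hnn hsub ε hε hdisc a ha _ hm _ hc
      have hint : (k.toNat : ℤ) = k := by omega
      have h2 : ((k.toNat : ℤ) : ℝ) = |(k:ℝ)| := by
        rw [abs_of_pos (show (0:ℝ) < k by exact_mod_cast hpos)]
        exact_mod_cast hint
      calc (|k| : ℝ) = |(k : ℝ)| := by push_cast; ring
        _ = ((k.toNat : ℤ) : ℝ) := h2.symm
        _ ≤ 2 * norm a / ε := by exact_mod_cast this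
  have hNle : (|k| : ℝ) ≤ (N : ℝ) := le_trans habs (Int.le_ceil _)
  have : |k| ≤ N := by exact_mod_cast hNle
  simpa [Set.mem_Icc] using abs_le.mp this
end

section
/- Let $G$ be a group equipped with a seminorm $\|\cdot\| : G \to \mathbb{R}$ (i.e. $\|g\| \ge 0$, $\|g^{-1}\| = \|g\|$, $\|gh\| \le \|g\| + \|h\|$) which is translation discrete with constant $\varepsilon > 0$, and suppose every finite subgroup of $G$ has order at most $M$. Let $a \in G$ have infinite order. Then every virtually infinite cyclic subgroup $A \le G$ containing $a$ satisfies $[A : \langle a \rangle] \le 2 M \tau(a)/\varepsilon$, where $\tau(a) = \liminf_{n\to\infty} \|a^n\|/n$; in particular this index is finite and uniformly bounded over all such $A$. -/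
open Filter Subgroup Function


private lemma tendsto_tau {G : Type*} [Group G] (norm : G → ℝ)
    (hnn : ∀ g, 0 ≤ norm g)
    (hsub : ∀ g h : G, norm (g * h) ≤ norm g + norm h) (g : G) :
    Filter.Tendsto (fun n : ℕ => norm (g ^ n) / n) Filter.atTop
      (nhds (Filter.liminf (fun n : ℕ => norm (g ^ n) / n) Filter.atTop)) := by
  have hs : Subadditive fun n => norm (g ^ n) := fun m n => by
    show norm (g ^ (m + n)) ≤ _
    rw [pow_add]; exact hsub _ _
  have hb : BddBelow (Set.range fun n : ℕ => norm (g ^ n) / n) := by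
    refine ⟨0, ?_⟩; rintro x ⟨n, rfl⟩
    exact div_nonneg (hnn _) (Nat.cast_nonneg n)
  have ht := hs.tendsto_lim hb
  rwa [ht.liminf_eq]

private lemma tau_pow {G : Type*} [Group G] (norm : G → ℝ)
    (hnn : ∀ g, 0 ≤ norm g)
    (hsub : ∀ g h : G, norm (g * h) ≤ norm g + norm h) (g : G) (m : ℕ) (hm : m ≠ 0) :
    Filter.liminf (fun n : ℕ => norm ((g ^ m) ^ n) / n) Filter.atTop
      = m * Filter.liminf (fun n : ℕ => norm (g ^ n) / n) Filter.atTop := by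
  have h1 := tendsto_tau norm hnn hsub g
  have h2 : Tendsto (fun n : ℕ => m * n) atTop atTop :=
    Filter.tendsto_atTop_mono (fun n => Nat.le_mul_of_pos_left n (Nat.pos_of_ne_zero hm))
      tendsto_id
  have h3 := (h1.comp h2).const_mul (m : ℝ)
  have heq : (fun n : ℕ => (m : ℝ) *
      ((fun k : ℕ => norm (g ^ k) / k) ∘ (fun n : ℕ => m * n)) n)
      = fun n : ℕ => norm ((g ^ m) ^ n) / n := by
    funext n
    simp only [Function.comp_apply, ← pow_mul]
    push_cast
    rw [← mul_div_assoc, mul_div_mul_left _ _ (by exact_mod_cast hm : (m : ℝ) ≠ 0)]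
  rw [heq] at h3
  exact ((tendsto_tau norm hnn hsub (g ^ m)).liminf_eq ▸ h3.liminf_eq : _)

private lemma tau_inv {G : Type*} [Group G] (norm : G → ℝ)
    (hinv : ∀ g : G, norm g⁻¹ = norm g) (g : G) :
    Filter.liminf (fun n : ℕ => norm (g⁻¹ ^ n) / n) Filter.atTop
      = Filter.liminf (fun n : ℕ => norm (g ^ n) / n) Filter.atTop := by
  simp only [inv_pow, hinv]

private lemma tau_le_tau {G : Type*} [Group G] (norm : G → ℝ)
    (hnn : ∀ g, 0 ≤ norm g)
    (hsub : ∀ g h : G, norm (g * h) ≤ norm g + norm h) (g h : G) (c : ℝ)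
    (hc : ∀ n : ℕ, norm (h ^ n) - c ≤ norm (g ^ n)) :
    Filter.liminf (fun n : ℕ => norm (h ^ n) / n) Filter.atTop
      ≤ Filter.liminf (fun n : ℕ => norm (g ^ n) / n) Filter.atTop := by
  have h1 := tendsto_tau norm hnn hsub g
  have h2 := (tendsto_tau norm hnn hsub h).sub
    (tendsto_const_div_atTop_nhds_zero_nat c)
  rw [sub_zero] at h2
  refine le_of_tendsto_of_tendsto' h2 h1 fun n => ?_
  rcases Nat.eq_zero_or_pos n with hn | hn
  · simp [hn]
  · rw [div_sub_div_same]
    exact div_le_div_of_nonneg_right (hc n) (by positivity)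


-- every subgroup of `Multiplicative ℤ` is `zpowers` of some element
private lemma multint_cyclic (S : Subgroup (Multiplicative ℤ)) :
    ∃ w : Multiplicative ℤ, S = Subgroup.zpowers w := by
  obtain ⟨g, hg⟩ := IsCyclic.exists_generator (α := S)
  refine ⟨(g : Multiplicative ℤ), le_antisymm ?_ ?_⟩
  · intro x hx
    obtain ⟨k, hk⟩ := Subgroup.mem_zpowers_iff.mp (hg ⟨x, hx⟩)
    exact Subgroup.mem_zpowers_iff.mpr ⟨k, by
      simpa using congrArg (Subtype.val) hk⟩
  · rw [Subgroup.zpowers_le]; exact g.2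

private lemma zpowers_subgroupOf {G : Type*} [Group G] {K : Subgroup G} (a : G) (ha : a ∈ K) :
    (Subgroup.zpowers a).subgroupOf K = Subgroup.zpowers (⟨a, ha⟩ : K) := by
  ext x
  simp only [Subgroup.mem_subgroupOf, Subgroup.mem_zpowers_iff]
  constructor
  · rintro ⟨k, hk⟩
    exact ⟨k, by ext; simpa using hk⟩
  · rintro ⟨k, rfl⟩
    exact ⟨k, by simp⟩

private lemma centralizer_two {H : Type*} [Group H] (t : H)
    (hd : ∀ g : H, g * t * g⁻¹ = t ∨ g * t * g⁻¹ = t⁻¹) :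
    (Subgroup.centralizer {t}).FiniteIndex ∧ (Subgroup.centralizer {t}).index ≤ 2 := by
  classical
  set C := Subgroup.centralizer ({t} : Set H) with hC
  have hmemC : ∀ z : H, z ∈ C ↔ t * z = z * t := by
    intro z
    rw [hC, Subgroup.mem_centralizer_iff]
    simp
  have key : ∀ g g' : H, g * t * g⁻¹ = g' * t * g'⁻¹ → g⁻¹ * g' ∈ C := by
    intro g g' hgg'
    rw [hmemC]
    have : t * (g⁻¹ * g') = g⁻¹ * (g * t * g⁻¹) * g' := by group
    rw [this, hgg']; group
  have hwd : ∀ g g' : H, g⁻¹ * g' ∈ C → g * t * g⁻¹ = g' * t * g'⁻¹ := by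
    intro g g' hgg'
    have hz : t * (g⁻¹ * g') = (g⁻¹ * g') * t := (hmemC _).mp hgg'
    have : g' * t * g'⁻¹ = g * ((g⁻¹ * g') * t * (g⁻¹ * g')⁻¹) * g⁻¹ := by group
    rw [this, ← hz]; group
  let F : H ⧸ C → Bool := fun y =>
    Quotient.liftOn' y (fun g => decide (g * t * g⁻¹ = t)) (by
      intro g g' hr
      have : g⁻¹ * g' ∈ C := (QuotientGroup.leftRel_apply).mp hr
      simp [hwd g g' this])
  have hFinj : Function.Injective F := by
    intro y y'
    refine Quotient.inductionOn₂' y y' ?_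
    intro g g' hFe
    refine Quotient.sound' ((QuotientGroup.leftRel_apply).mpr ?_)
    have hFe' : decide (g * t * g⁻¹ = t) = decide (g' * t * g'⁻¹ = t) := hFe
    have hiff := decide_eq_decide.mp hFe'
    by_cases hcase : g * t * g⁻¹ = t
    · exact key g g' (hcase.trans (hiff.mp hcase).symm)
    · have h1' : g * t * g⁻¹ = t⁻¹ := (hd g).resolve_left hcase
      have h2' : g' * t * g'⁻¹ = t⁻¹ := (hd g').resolve_left fun hh => hcase (hiff.mpr hh)
      exact key g g' (h1'.trans h2'.symm)
  haveI : Finite (H ⧸ C) := Finite.of_injective F hFinj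
  constructor
  · exact Subgroup.finiteIndex_of_finite_quotient (H := C)
  · have := Nat.card_le_card_of_injective F hFinj
    simpa [Subgroup.index] using this


private lemma comm_hom_to_int {Γ : Type*} [CommGroup Γ] (t : Γ)
    (ht : Function.Injective fun k : ℤ => t ^ k)
    (hfi : (Subgroup.zpowers t).index ≠ 0) :
    ∃ (φ : Γ →* Multiplicative ℤ) (K : ℕ), K ≠ 0 ∧
      ∀ g : Γ, g ^ K = t ^ (Multiplicative.toAdd (φ g)) := by
  classical
  set K := (Subgroup.zpowers t).index with hK
  have hpow : ∀ g : Γ, g ^ K ∈ Subgroup.zpowers t := fun g =>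
    Subgroup.pow_index_mem (Subgroup.zpowers t) g
  have hex : ∀ g : Γ, ∃ k : ℤ, t ^ k = g ^ K := fun g =>
    Subgroup.mem_zpowers_iff.mp (hpow g)
  let e : Γ → ℤ := fun g => (hex g).choose
  have he : ∀ g : Γ, t ^ (e g) = g ^ K := fun g => (hex g).choose_spec
  refine ⟨{ toFun := fun g => Multiplicative.ofAdd (e g)
            map_one' := ?_
            map_mul' := ?_ }, K, hfi, ?_⟩
  · have : t ^ (e 1) = t ^ (0 : ℤ) := by rw [he 1]; simp
    simpa using congrArg Multiplicative.ofAdd (ht this)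
  · intro g h
    have : t ^ (e (g * h)) = t ^ (e g + e h) := by
      rw [he (g * h), zpow_add, he g, he h, mul_pow]
    exact congrArg Multiplicative.ofAdd (ht this)
  · intro g
    exact (he g).symm

private lemma quot_bound {Γ : Type*} [Group Γ] (φ : Γ →* Multiplicative ℤ)
    (hker : Finite φ.ker) (u x : Γ) (p : ℤ) (hp : 0 < p)
    (hu1 : φ u ≠ 1) (hmem : ∀ g : Γ, φ g ∈ Subgroup.zpowers (φ u))
    (hx : φ x = φ u ^ p) :
    Finite (Γ ⧸ Subgroup.zpowers x) ∧
      Nat.card (Γ ⧸ Subgroup.zpowers x) ≤ Nat.card φ.ker * p.natAbs := by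
  classical
  have hpne : p ≠ 0 := hp.ne'
  have hinj : Function.Injective fun k : ℤ => φ u ^ k := by
    intro k l hkl
    have hz : Multiplicative.toAdd (φ u) ≠ 0 := by
      intro h0
      exact hu1 (by rw [← ofAdd_toAdd (φ u), h0]; rfl)
    have := congrArg Multiplicative.toAdd hkl
    simp only [toAdd_zpow, smul_eq_mul] at this
    exact mul_left_cancel₀ hz (by linarith [this])
  have hm : ∀ g : Γ, ∃ k : ℤ, φ u ^ k = φ g := fun g =>
    Subgroup.mem_zpowers_iff.mp (hmem g)
  let m : Γ → ℤ := fun g => (hm g).choose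
  have hms : ∀ g : Γ, φ u ^ (m g) = φ g := fun g => (hm g).choose_spec
  let r : Γ → ℤ := fun g => m g % p
  let q : Γ → ℤ := fun g => (m g - r g) / p
  have hdvd : ∀ g : Γ, p ∣ m g - r g := fun g => Int.dvd_self_sub_of_emod_eq rfl
  have hqr : ∀ g : Γ, p * q g + r g = m g := by
    intro g
    have h2 := Int.ediv_mul_cancel (hdvd g)
    show p * ((m g - r g) / p) + r g = m g
    rw [mul_comm, h2]; ring
  have hr0 : ∀ g : Γ, 0 ≤ r g := fun g => Int.emod_nonneg (m g) hpne
  have hrp : ∀ g : Γ, r g < p := fun g => Int.emod_lt_of_pos (m g) hp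
  let κ : Γ → Γ := fun g => g * x ^ (-q g) * u ^ (-r g)
  have hκ : ∀ g : Γ, κ g ∈ φ.ker := by
    intro g
    have : φ (κ g) = φ u ^ (m g + p * (-q g) + (-r g)) := by
      rw [show κ g = g * x ^ (-q g) * u ^ (-r g) from rfl, map_mul, map_mul,
        map_zpow, map_zpow, hx, ← hms g, ← zpow_mul, ← zpow_add, ← zpow_add]
    rw [MonoidHom.mem_ker, this]
    have : m g + p * (-q g) + (-r g) = 0 := by
      have h3 := hqr g; linarith
    rw [this, zpow_zero]
  -- uniqueness of exponents
  have hmuniq : ∀ (g : Γ) (k : ℤ), φ g = φ u ^ k → m g = k := by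
    intro g k hk
    refine hinj ?_
    show φ u ^ m g = φ u ^ k
    rw [hms g, hk]
  -- behaviour under right multiplication by x ^ w
  have hshift : ∀ (g : Γ) (w : ℤ),
      q (g * x ^ w) = q g + w ∧ r (g * x ^ w) = r g := by
    intro g w
    have hmw : m (g * x ^ w) = m g + p * w := by
      refine hmuniq _ _ ?_
      rw [map_mul, map_zpow, hx, ← hms g, ← zpow_mul, ← zpow_add]
    have hrw : r (g * x ^ w) = r g := by
      show m (g * x ^ w) % p = m g % p
      rw [hmw, mul_comm p w, Int.add_mul_emod_self_right]
    refine ⟨?_, hrw⟩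
    show (m (g * x ^ w) - r (g * x ^ w)) / p = (m g - r g) / p + w
    rw [hmw, hrw]
    have : m g + p * w - r g = m g - r g + w * p := by ring
    rw [this, Int.add_mul_ediv_right _ _ hpne]
  have hκshift : ∀ (g : Γ) (w : ℤ), κ (g * x ^ w) = κ g := by
    intro g w
    obtain ⟨hq', hr'⟩ := hshift g w
    show g * x ^ w * x ^ (-q (g * x ^ w)) * u ^ (-r (g * x ^ w))
        = g * x ^ (-q g) * u ^ (-r g)
    rw [hq', hr', mul_assoc g, ← zpow_add]
    congr 2
    congr 1
    ring
  let F : Γ ⧸ Subgroup.zpowers x → φ.ker × ZMod p.natAbs := fun y =>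
    Quotient.liftOn' y (fun g => ((⟨κ g, hκ g⟩ : φ.ker), ((r g : ZMod p.natAbs))))
      (by
        intro g g' hrel
        obtain ⟨w, hw⟩ := Subgroup.mem_zpowers_iff.mp
          ((QuotientGroup.leftRel_apply).mp hrel)
        have hg' : g' = g * x ^ w := by rw [hw]; group
        subst hg'
        obtain ⟨_, hr'⟩ := hshift g w
        simp [hκshift g w, hr'])
  have hFinj : Function.Injective F := by
    intro y y'
    refine Quotient.inductionOn₂' y y' ?_
    intro g g' hFe
    have hκe : κ g = κ g' := congrArg (fun z => (z.1 : Γ)) hFe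
    have hre : (r g : ZMod p.natAbs) = (r g' : ZMod p.natAbs) :=
      congrArg Prod.snd hFe
    have hrr : r g = r g' := by
      have hmod := (ZMod.intCast_eq_intCast_iff' _ _ _).mp hre
      have hcast : ((p.natAbs : ℤ)) = p := Int.natAbs_of_nonneg hp.le
      rw [hcast, Int.emod_eq_of_lt (hr0 g) (hrp g),
        Int.emod_eq_of_lt (hr0 g') (hrp g')] at hmod
      exact hmod
    refine Quotient.sound' ((QuotientGroup.leftRel_apply).mpr ?_)
    have hxx : g * x ^ (-q g) = g' * x ^ (-q g') := by
      have h2 : g * x ^ (-q g) * u ^ (-r g) = g' * x ^ (-q g') * u ^ (-r g') := hκe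
      rw [hrr] at h2
      exact mul_right_cancel h2
    refine Subgroup.mem_zpowers_iff.mpr ⟨-q g + q g', ?_⟩
    rw [zpow_add]
    calc x ^ (-q g) * x ^ (q g')
        = (g⁻¹ * (g * x ^ (-q g))) * x ^ (q g') := by group
      _ = (g⁻¹ * (g' * x ^ (-q g'))) * x ^ (q g') := by rw [hxx]
      _ = g⁻¹ * g' := by group
  haveI hZfin : NeZero p.natAbs := ⟨by simpa using hpne⟩
  haveI : Finite (φ.ker × ZMod p.natAbs) := by infer_instance
  haveI hQfin : Finite (Γ ⧸ Subgroup.zpowers x) := Finite.of_injective F hFinj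
  refine ⟨hQfin, ?_⟩
  calc Nat.card (Γ ⧸ Subgroup.zpowers x) ≤ Nat.card (φ.ker × ZMod p.natAbs) :=
        Nat.card_le_card_of_injective F hFinj
    _ = Nat.card φ.ker * p.natAbs := by
        rw [Nat.card_prod, Nat.card_zmod]

/-- In a group with a translation discrete seminorm (constant `ε`) and bound `M` on
orders of finite subgroups, for a fixed infinite-order element `a`, every virtually
infinite cyclic subgroup `A` containing `a` satisfies `[A : ⟨a⟩] ≤ 2 M τ(a) / ε`. -/
theorem index_of_cyclic_in_virtually_cyclic_bounded
    (G : Type*) [Group G] (norm : G → ℝ)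
    (hnn : ∀ g, 0 ≤ norm g)
    (hinv : ∀ g : G, norm g⁻¹ = norm g)
    (hsub : ∀ g h : G, norm (g * h) ≤ norm g + norm h)
    (ε : ℝ) (hε : 0 < ε)
    (hdisc : ∀ g : G, (∀ n : ℕ, 0 < n → g ^ n ≠ 1) →
      ε ≤ Filter.liminf (fun n : ℕ => norm (g ^ n) / n) Filter.atTop)
    (M : ℕ) (hbound : ∀ K : Subgroup G, (K : Set G).Finite → Nat.card K ≤ M)
    (a : G) (ha : ∀ n : ℕ, 0 < n → a ^ n ≠ 1)
    (A : Subgroup G) (haA : a ∈ A)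
    (hvc : ∃ B : Subgroup A, B.FiniteIndex ∧ Nonempty (B ≃* Multiplicative ℤ)) :
    ((Subgroup.zpowers a).subgroupOf A).FiniteIndex ∧
    ((((Subgroup.zpowers a).subgroupOf A).index : ℝ) ≤
      2 * M * (Filter.liminf (fun n : ℕ => norm (a ^ n) / n) Filter.atTop) / ε) := by
  classical
  obtain ⟨B, hBfi, ⟨e⟩⟩ := hvc
  haveI := hBfi
  set aH : A := ⟨a, haA⟩ with haH_def
  have haHpow : ∀ n : ℕ, 0 < n → aH ^ n ≠ 1 := by
    intro n hn h1
    exact ha n hn (by simpa [haH_def] using congrArg (Subtype.val) h1)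
  -- the normal core of B and its generator t
  set N := B.normalCore with hNdef
  have hNleB : N ≤ B := Subgroup.normalCore_le B
  haveI hNfi : N.FiniteIndex := Subgroup.finiteIndex_normalCore B
  obtain ⟨w, hw⟩ := multint_cyclic ((N.subgroupOf B).map e.toMonoidHom)
  set tB : B := e.symm w with htB_def
  have hNB : N.subgroupOf B = Subgroup.zpowers tB := by
    have h1 : ((N.subgroupOf B).map e.toMonoidHom).map e.symm.toMonoidHom
        = Subgroup.zpowers tB := by
      rw [hw, MonoidHom.map_zpowers]; rfl
    rw [← h1, Subgroup.map_map]
    have h2 : (e.symm.toMonoidHom.comp e.toMonoidHom) = MonoidHom.id B := by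
      ext x; simp
    rw [h2, Subgroup.map_id]
  set t : A := ↑tB with ht_def
  have hNt : N = Subgroup.zpowers t := by
    have h3 := Subgroup.subgroupOf_map_subtype N B
    rw [hNB, MonoidHom.map_zpowers, inf_eq_left.mpr hNleB] at h3
    exact h3.symm
  -- A is infinite
  have hcard0 : Nat.card A = 0 := by
    by_contra hc
    haveI : Finite A := Nat.finite_of_card_ne_zero hc
    exact haHpow (Nat.card A) Nat.card_pos pow_card_eq_one'
  have htne : t ≠ 1 := by
    intro h1
    have hb : N = ⊥ := by rw [hNt, h1]; exact Subgroup.zpowers_one_eq_bot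
    have : N.index = Nat.card A := by rw [hb, Subgroup.index_bot]
    exact hNfi.index_ne_zero (by rw [this, hcard0])
  have hwne : w ≠ 1 := by
    intro h; apply htne
    rw [ht_def, htB_def, h, map_one]; rfl
  have htfin : ¬ IsOfFinOrder t := by
    intro hf
    obtain ⟨n, hn, hpow⟩ := isOfFinOrder_iff_pow_eq_one.mp hf
    have h2 : tB ^ n = 1 := by
      apply Subtype.coe_injective
      simpa [ht_def] using hpow
    have h3 : w ^ n = 1 := by
      have : e tB = w := by rw [htB_def, MulEquiv.apply_symm_apply]
      rw [← this, ← map_pow, h2, map_one]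
    apply hwne
    have h4 := congrArg Multiplicative.toAdd h3
    simp only [toAdd_pow, smul_eq_mul, toAdd_one] at h4
    have : Multiplicative.toAdd w = 0 := by
      rcases mul_eq_zero.mp h4 with h | h
      · exact absurd (by exact_mod_cast h) hn.ne'
      · exact h
    rw [← ofAdd_toAdd w, this]; rfl
  have htinj : Function.Injective fun k : ℤ => t ^ k :=
    injective_zpow_iff_not_isOfFinOrder.mpr htfin
  -- conjugation dichotomy
  haveI hNnormal : N.Normal := B.normalCore_normal
  have htN : t ∈ N := by rw [hNt]; exact Subgroup.mem_zpowers t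
  have hdich : ∀ g : A, g * t * g⁻¹ = t ∨ g * t * g⁻¹ = t⁻¹ := by
    intro g
    have hmem1 : g * t * g⁻¹ ∈ Subgroup.zpowers t := by
      rw [← hNt]; exact hNnormal.conj_mem t htN g
    have hmem2 : g⁻¹ * t * g⁻¹⁻¹ ∈ Subgroup.zpowers t := by
      rw [← hNt]; exact hNnormal.conj_mem t htN g⁻¹
    obtain ⟨m1, hm1⟩ := Subgroup.mem_zpowers_iff.mp hmem1
    obtain ⟨m2, hm2⟩ := Subgroup.mem_zpowers_iff.mp hmem2
    have hcomp : t ^ (m2 * m1) = t ^ (1 : ℤ) := by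
      rw [zpow_mul, hm2, conj_zpow, hm1, zpow_one]
      group
    have hm21 : m2 * m1 = 1 := htinj hcomp
    have : m1 = 1 ∨ m1 = -1 := by
      rcases Int.eq_one_or_neg_one_of_mul_eq_one' hm21 with ⟨h1, h2⟩ | ⟨h1, h2⟩
      · exact Or.inl h2
      · exact Or.inr h2
    rcases this with h1 | h1
    · left; rw [← hm1, h1, zpow_one]
    · right; rw [← hm1, h1]; simp
  obtain ⟨hA₀fi, hA₀le2⟩ := centralizer_two t hdich
  set A₀ := Subgroup.centralizer ({t} : Set A) with hA₀def
  -- a ∈ A₀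
  haveI : Finite ((↥A) ⧸ N) := Subgroup.finite_quotient_of_finiteIndex (H := N)
  have hpigeon : ∃ s : ℕ, 0 < s ∧ aH ^ s ∈ N := by
    obtain ⟨i, j, hij, hfij⟩ := Finite.exists_ne_map_eq_of_infinite
      (fun n : ℕ => ((aH ^ n : A) : (↥A) ⧸ N))
    have key : ∀ i j : ℕ, i < j → ((aH ^ i : A) : (↥A) ⧸ N) = ((aH ^ j : A) : (↥A) ⧸ N) →
        ∃ s : ℕ, 0 < s ∧ aH ^ s ∈ N := by
      intro i j hlt hq
      refine ⟨j - i, by omega, ?_⟩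
      have h1 : (aH ^ i)⁻¹ * aH ^ j ∈ N := QuotientGroup.eq.mp hq
      have h2 : aH ^ j = aH ^ i * aH ^ (j - i) := by
        rw [← pow_add]; congr 1; omega
      rw [h2] at h1
      simpa using h1
    rcases lt_or_gt_of_ne hij with h | h
    · exact key i j h hfij
    · exact key j i h hfij.symm
  obtain ⟨s, hs, hsN⟩ := hpigeon
  obtain ⟨rz, hrz⟩ := Subgroup.mem_zpowers_iff.mp (by rw [hNt] at hsN; exact hsN)
  have hrz0 : rz ≠ 0 := by
    intro h
    exact haHpow s hs (by rw [← hrz, h, zpow_zero])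
  have haA₀ : aH ∈ A₀ := by
    rcases hdich aH with hcase | hcase
    · rw [hA₀def, Subgroup.mem_centralizer_iff]
      intro y hy
      rcases hy with rfl
      have h5 : aH * t = t * aH := by
        calc aH * t = aH * t * aH⁻¹ * aH := by group
          _ = t * aH := by rw [hcase]
      exact h5.symm
    · exfalso
      have h1 : aH * t ^ rz * aH⁻¹ = (aH * t * aH⁻¹) ^ rz := (conj_zpow).symm
      rw [hcase, inv_zpow, ← zpow_neg] at h1
      have h2 : aH * t ^ rz * aH⁻¹ = t ^ rz := by
        rw [hrz]
        group
      have h3 : t ^ rz = t ^ (-rz) := by rw [← h2, h1]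
      have := htinj h3
      omega
  -- pass to the centralizer A₀ and its center
  set a₀ : ↥A₀ := ⟨aH, haA₀⟩ with ha₀def
  have htA₀ : t ∈ A₀ := by
    rw [hA₀def, Subgroup.mem_centralizer_iff]
    intro y hy; rcases hy with rfl; rfl
  set t₀ : ↥A₀ := ⟨t, htA₀⟩ with ht₀def
  have hcomm : ∀ g : ↥A₀, (g : A) * t = t * (g : A) := by
    intro g
    exact (Subgroup.mem_centralizer_iff.mp g.2 t rfl).symm
  have ht₀c : t₀ ∈ Subgroup.center ↥A₀ := by
    rw [Subgroup.mem_center_iff]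
    intro g
    apply Subtype.coe_injective
    push_cast
    exact hcomm g
  have ht₀inj : Function.Injective fun k : ℤ => t₀ ^ k := by
    intro k l hkl
    apply htinj
    have := congrArg (fun z : ↥A₀ => (z : A)) hkl
    simpa using this
  have hNleA₀ : N ≤ A₀ := by
    rw [hNt]; exact Subgroup.zpowers_le.mpr htA₀
  have hzt₀ : N.subgroupOf A₀ = Subgroup.zpowers t₀ := by
    rw [hNt]
    exact zpowers_subgroupOf t htA₀
  have ht₀idx : (Subgroup.zpowers t₀).index ≠ 0 := by
    have h6 := Subgroup.relIndex_mul_index hNleA₀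
    intro h0
    have : N.relIndex A₀ = 0 := by
      rw [Subgroup.relIndex, hzt₀, h0]
    rw [this, zero_mul] at h6
    exact hNfi.index_ne_zero h6.symm
  have hZle : Subgroup.zpowers t₀ ≤ Subgroup.center ↥A₀ := Subgroup.zpowers_le.mpr ht₀c
  haveI : (Subgroup.zpowers t₀).FiniteIndex := ⟨ht₀idx⟩
  haveI hcfi : (Subgroup.center ↥A₀).FiniteIndex := Subgroup.finiteIndex_of_le hZle
  set ψ := MonoidHom.transferCenterPow ↥A₀ with hψdef
  set C := (Subgroup.center ↥A₀).index with hCdef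
  have hC0 : C ≠ 0 := hcfi.index_ne_zero
  set t₁ : ↥(Subgroup.center ↥A₀) := ⟨t₀, ht₀c⟩ with ht₁def
  have ht₁inj : Function.Injective fun k : ℤ => t₁ ^ k := by
    intro k l hkl
    apply ht₀inj
    have := congrArg (fun z : ↥(Subgroup.center ↥A₀) => (z : ↥A₀)) hkl
    simpa using this
  have ht₁idx : (Subgroup.zpowers t₁).index ≠ 0 := by
    have h7 : (Subgroup.zpowers t₀).subgroupOf (Subgroup.center ↥A₀) = Subgroup.zpowers t₁ :=
      zpowers_subgroupOf t₀ ht₀c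
    have h8 := Subgroup.relIndex_mul_index hZle
    intro h0
    have : (Subgroup.zpowers t₀).relIndex (Subgroup.center ↥A₀) = 0 := by
      rw [Subgroup.relIndex, h7, h0]
    rw [this, zero_mul] at h8
    exact ht₀idx h8.symm
  obtain ⟨φZ, KZ, hKZ0, hspecZ⟩ := open scoped IsMulCommutative in comm_hom_to_int t₁ ht₁inj ht₁idx
  set φ : ↥A₀ →* Multiplicative ℤ := φZ.comp ψ with hφdef
  have hkey : ∀ g : ↥A₀, g ^ (C * KZ) = t₀ ^ (Multiplicative.toAdd (φ g)) := by
    intro g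
    have h9 := congrArg (fun z : ↥(Subgroup.center ↥A₀) => (z : ↥A₀)) (hspecZ (ψ g))
    simp only [SubgroupClass.coe_pow, SubgroupClass.coe_zpow] at h9
    have h10 : ((ψ g : ↥(Subgroup.center ↥A₀)) : ↥A₀) = g ^ C := by
      rw [hψdef]
      exact MonoidHom.transferCenterPow_apply g
    rw [h10, ← pow_mul] at h9
    exact h9
  have hQ0 : C * KZ ≠ 0 := Nat.mul_ne_zero hC0 hKZ0
  -- kernel of φ is a finite subgroup of order at most M
  have hker_tors : ∀ k : ↥A₀, k ∈ φ.ker → k ^ (C * KZ) = 1 := by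
    intro k hk
    have h11 := hkey k
    rw [MonoidHom.mem_ker] at hk
    rw [hk] at h11
    simpa using h11
  haveI hQt₀fin : Finite ((↥A₀) ⧸ Subgroup.zpowers t₀) := by
    apply Nat.finite_of_card_ne_zero
    rwa [← Subgroup.index_eq_card]
  have hker_inj : Function.Injective
      (fun k : φ.ker => ((k : ↥A₀) : (↥A₀) ⧸ Subgroup.zpowers t₀)) := by
    intro k l hkl
    have hmem := QuotientGroup.eq.mp hkl
    obtain ⟨z, hz⟩ := Subgroup.mem_zpowers_iff.mp hmem
    have hkerm : ((k : ↥A₀))⁻¹ * (l : ↥A₀) ∈ φ.ker := mul_mem (inv_mem k.2) l.2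
    have h12 : (t₀ ^ z) ^ (C * KZ) = 1 := by rw [hz]; exact hker_tors _ hkerm
    have hz0 : z = 0 := by
      have h13 : t₀ ^ (z * (C * KZ : ℕ)) = t₀ ^ (0 : ℤ) := by
        rw [zpow_mul, zpow_zero, zpow_natCast, h12]
      have h14 := ht₀inj h13
      have : (C * KZ : ℤ) ≠ 0 := by exact_mod_cast hQ0
      exact by
        rcases mul_eq_zero.mp h14 with h | h
        · exact h
        · exact absurd h this
    rw [hz0, zpow_zero] at hz
    have : (k : ↥A₀) = (l : ↥A₀) := by
      have := hz.symm
      rwa [inv_mul_eq_one] at this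
    exact Subtype.coe_injective this
  haveI hker_finite : Finite φ.ker := Finite.of_injective _ hker_inj
  have hkerM : Nat.card φ.ker ≤ M := by
    set Kmap : Subgroup G := (φ.ker.map A₀.subtype).map A.subtype with hKmapdef
    have e1 := (Subgroup.equivMapOfInjective φ.ker A₀.subtype A₀.subtype_injective).toEquiv
    have e2 := (Subgroup.equivMapOfInjective (φ.ker.map A₀.subtype) A.subtype
      A.subtype_injective).toEquiv
    have hcardeq : Nat.card Kmap = Nat.card φ.ker := by
      rw [hKmapdef]
      rw [← Nat.card_congr e2, ← Nat.card_congr e1]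
    have hKmapfin : (Kmap : Set G).Finite := by
      rw [hKmapdef, Subgroup.coe_map, Subgroup.coe_map]
      exact ((Set.toFinite (φ.ker : Set ↥A₀)).image _).image _
    calc Nat.card φ.ker = Nat.card Kmap := hcardeq.symm
      _ ≤ M := hbound Kmap hKmapfin
  -- φ a₀ is nontrivial; generator of the range
  have ha₀pow : ∀ n : ℕ, 0 < n → a₀ ^ n ≠ 1 := by
    intro n hn h1
    apply haHpow n hn
    have := congrArg (fun z : ↥A₀ => (z : A)) h1
    simpa using this
  have hφa0ne : φ a₀ ≠ 1 := by
    intro h1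
    have h2 := hkey a₀
    rw [h1] at h2
    simp only [toAdd_one, zpow_zero] at h2
    exact ha₀pow (C * KZ) (Nat.pos_of_ne_zero hQ0) h2
  obtain ⟨w₂, hw₂⟩ := multint_cyclic φ.range
  obtain ⟨u, hu⟩ : ∃ u : ↥A₀, φ u = w₂ := by
    have : w₂ ∈ φ.range := by rw [hw₂]; exact Subgroup.mem_zpowers w₂
    exact this
  have hmem' : ∀ g : ↥A₀, φ g ∈ Subgroup.zpowers (φ u) := by
    intro g
    rw [hu, ← hw₂]
    exact ⟨g, rfl⟩
  obtain ⟨p₀, hp₀⟩ := Subgroup.mem_zpowers_iff.mp (hmem' a₀)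
  have hp₀ne : p₀ ≠ 0 := by
    intro h; exact hφa0ne (by rw [← hp₀, h, zpow_zero])
  have hw₂ne : φ u ≠ 1 := by
    intro h; exact hφa0ne (by rw [← hp₀, h, one_zpow])
  obtain ⟨u', p, hp_pos, hu'1, hmem'', hx''⟩ :
      ∃ (u' : ↥A₀) (p : ℤ), 0 < p ∧ φ u' ≠ 1 ∧
        (∀ g : ↥A₀, φ g ∈ Subgroup.zpowers (φ u')) ∧ φ a₀ = (φ u') ^ p := by
    rcases lt_trichotomy p₀ 0 with hlt | hzero | hgt
    · refine ⟨u⁻¹, -p₀, by omega, ?_, ?_, ?_⟩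
      · rw [map_inv]; intro hh; exact hw₂ne (by rwa [inv_eq_one] at hh)
      · intro g; rw [map_inv, Subgroup.zpowers_inv]; exact hmem' g
      · rw [map_inv, inv_zpow, ← zpow_neg, neg_neg, hp₀]
    · exact absurd hzero hp₀ne
    · exact ⟨u, p₀, hgt, hw₂ne, hmem', hp₀.symm⟩
  obtain ⟨hQfin, hQcard⟩ := quot_bound φ hker_finite u' a₀ p hp_pos hu'1 hmem'' hx''
  -- index bookkeeping
  have hsub1 : (Subgroup.zpowers a).subgroupOf A = Subgroup.zpowers aH :=
    zpowers_subgroupOf a haA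
  have hsub2 : (Subgroup.zpowers aH).subgroupOf A₀ = Subgroup.zpowers a₀ :=
    zpowers_subgroupOf aH haA₀
  have hle : Subgroup.zpowers aH ≤ A₀ := Subgroup.zpowers_le.mpr haA₀
  have hidx : (Subgroup.zpowers aH).relIndex A₀ * A₀.index = (Subgroup.zpowers aH).index :=
    Subgroup.relIndex_mul_index hle
  have hrel_eq : (Subgroup.zpowers aH).relIndex A₀
      = Nat.card ((↥A₀) ⧸ Subgroup.zpowers a₀) := by
    rw [Subgroup.relIndex, hsub2, Subgroup.index_eq_card]
  have hrelne : (Subgroup.zpowers aH).relIndex A₀ ≠ 0 := by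
    rw [hrel_eq]
    exact Nat.card_ne_zero.mpr ⟨inferInstance, hQfin⟩
  have hA₀ne : A₀.index ≠ 0 := hA₀fi.index_ne_zero
  refine ⟨?_, ?_⟩
  · rw [hsub1]
    exact ⟨by rw [← hidx]; exact Nat.mul_ne_zero hrelne hA₀ne⟩
  -- the norm estimate
  have hφv : φ (u' ^ p) = (φ u') ^ p := map_zpow φ u' p
  have hkerpow : ∀ n : ℕ, a₀ ^ n * ((u' ^ p) ^ n)⁻¹ ∈ φ.ker := by
    intro n
    rw [MonoidHom.mem_ker, map_mul, map_inv, map_pow, map_pow, hx'', hφv]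
    simp
  obtain ⟨c, hc⟩ : ∃ c : ℝ, ∀ k : φ.ker, norm (((k : ↥A₀) : ↥A) : G) ≤ c := by
    obtain ⟨c, hc⟩ := (Set.finite_range fun k : φ.ker =>
      norm (((k : ↥A₀) : ↥A) : G)).bddAbove
    exact ⟨c, fun k => hc ⟨k, rfl⟩⟩
  set f : ↥A₀ →* G := A.subtype.comp A₀.subtype with hfdef
  have hfinj : Function.Injective f := A.subtype_injective.comp A₀.subtype_injective
  set uG : G := f u' with huGdef
  set vG : G := uG ^ p with hvGdef
  have hnormineq : ∀ n : ℕ, norm (vG ^ n) - c ≤ norm (a ^ n) := by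
    intro n
    set k : ↥A₀ := a₀ ^ n * ((u' ^ p) ^ n)⁻¹ with hkdef
    have hk : k ∈ φ.ker := hkerpow n
    have h15 : k⁻¹ * a₀ ^ n = (u' ^ p) ^ n := by rw [hkdef]; group
    have hGrel : vG ^ n = f k⁻¹ * a ^ n := by
      have h16 := congrArg f h15
      rw [map_mul, map_pow] at h16
      have h17 : f ((u' ^ p) ^ n) = vG ^ n := by
        rw [map_pow, map_zpow, hvGdef, huGdef]
      have h18 : f a₀ = a := rfl
      rw [h18] at h16
      rw [← h17, ← h16]
    have h19 : norm (vG ^ n) ≤ norm (f k⁻¹) + norm (a ^ n) := by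
      rw [hGrel]; exact hsub _ _
    have h20 : norm (f k⁻¹) ≤ c := by
      rw [map_inv, hinv]
      exact hc ⟨k, hk⟩
    linarith
  have hτle := tau_le_tau norm hnn hsub a vG c hnormineq
  have hp_toNat : (p.toNat : ℤ) = p := Int.toNat_of_nonneg hp_pos.le
  have hvG_pow : vG = uG ^ (p.toNat) := by rw [hvGdef, ← zpow_natCast, hp_toNat]
  have hτv_eq : Filter.liminf (fun n : ℕ => norm (vG ^ n) / n) Filter.atTop
      = (p.toNat : ℝ) * Filter.liminf (fun n : ℕ => norm (uG ^ n) / n) Filter.atTop := by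
    rw [hvG_pow]
    exact tau_pow norm hnn hsub uG p.toNat (by omega)
  have huGord : ∀ n : ℕ, 0 < n → uG ^ n ≠ 1 := by
    intro n hn h1
    have h2 : f (u' ^ n) = f 1 := by rw [map_pow, map_one]; exact h1
    have h3 : u' ^ n = 1 := hfinj h2
    have h4 : (φ u') ^ n = 1 := by rw [← map_pow, h3, map_one]
    have h5 := congrArg Multiplicative.toAdd h4
    simp only [toAdd_pow, smul_eq_mul, toAdd_one] at h5
    rcases mul_eq_zero.mp h5 with h | h
    · exact hn.ne' (by exact_mod_cast h)
    · exact hu'1 (by rw [← ofAdd_toAdd (φ u'), h]; rfl)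
  have hεu := hdisc uG huGord
  set T := Filter.liminf (fun n : ℕ => norm (a ^ n) / n) Filter.atTop with hTdef
  have hpT : (p.toNat : ℝ) * ε ≤ T := by
    have h21 : (p.toNat : ℝ) * ε
        ≤ (p.toNat : ℝ) * Filter.liminf (fun n : ℕ => norm (uG ^ n) / n) Filter.atTop :=
      mul_le_mul_of_nonneg_left hεu (by positivity)
    calc (p.toNat : ℝ) * ε ≤ _ := h21
      _ = Filter.liminf (fun n : ℕ => norm (vG ^ n) / n) Filter.atTop := hτv_eq.symm
      _ ≤ T := hτle
  have hidxle : ((Subgroup.zpowers aH).index : ℝ) ≤ 2 * M * p.toNat := by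
    have h22 : (Subgroup.zpowers aH).index ≤ (M * p.natAbs) * 2 := by
      rw [← hidx]
      have h23 : (Subgroup.zpowers aH).relIndex A₀ ≤ M * p.natAbs := by
        rw [hrel_eq]
        exact hQcard.trans (Nat.mul_le_mul_right _ hkerM)
      exact Nat.mul_le_mul h23 hA₀le2
    have h24 : p.natAbs = p.toNat := by omega
    calc ((Subgroup.zpowers aH).index : ℝ) ≤ ((M * p.natAbs * 2 : ℕ) : ℝ) := by
          exact_mod_cast h22
      _ = 2 * M * p.toNat := by rw [h24]; push_cast; ring
  rw [hsub1]
  calc ((Subgroup.zpowers aH).index : ℝ) ≤ 2 * M * p.toNat := hidxle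
    _ ≤ 2 * M * (T / ε) := by
        refine mul_le_mul_of_nonneg_left ?_ (by positivity)
        rw [le_div_iff₀ hε]
        exact hpT
    _ = 2 * M * T / ε := by ring
end
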